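/- arXiv:math/0210052 — 4 statements merged into one kernel-verified Lean document; each statement's English description precedes it below -/
import Mathlib

section
/- Let A be a finitely generated free abelian group (equivalently, A ≅ ℤ^n), G an abelian group without odd torsion, h : A → G a homomorphism, and L ≤ A a subgroup with h(L) = 0 and L + 2A = A. Then h = 0. (This is the algebraic core of the Binary Cycle Test for finite graphs.) -/
/-- Finite-rank case: if `A` is finitely generated free abelian, `G` abelian without odd
torsion, `h` kills `L`, and `L + 2A = A`, then `h = 0`. -/
theorem stmt4 {A G : Type*} [AddCommGroup A] [Module.Free ℤ A] [Module.Finite ℤ A]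
    [AddCommGroup G]
    (hG : ∀ g : G, ∀ n : ℕ, Odd n → 0 < n → n • g = 0 → g = 0)
    (h : A →+ G) (L : AddSubgroup A)
    (hL : ∀ x ∈ L, h x = 0)
    (hL2 : ∀ a : A, ∃ l ∈ L, ∃ b : A, a = l + 2 • b) :
    h = 0 := by
  classical
  set L' : Submodule ℤ A := AddSubgroup.toIntSubmodule L with hL'
  let Q := A ⧸ L'
  let mk : A →ₗ[ℤ] Q := L'.mkQ
  have hdiv : (⊤ : Submodule ℤ Q) ≤ (Ideal.span {(2 : ℤ)}) • (⊤ : Submodule ℤ Q) := by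
    intro q _
    obtain ⟨a, rfl⟩ := L'.mkQ_surjective q
    obtain ⟨l, hl, b, hab⟩ := hL2 a
    have : L'.mkQ a = (2 : ℤ) • L'.mkQ b := by
      rw [hab, map_add, ← map_smul]
      have : L'.mkQ l = 0 := (Submodule.Quotient.mk_eq_zero L').mpr hl
      simp [this, two_smul, two_zsmul]
    rw [this]
    exact Submodule.smul_mem_smul (Ideal.subset_span rfl) trivial
  have hfg : (⊤ : Submodule ℤ Q).FG := Module.Finite.fg_top
  obtain ⟨r, hr1, hr0⟩ :=
    Submodule.exists_sub_one_mem_and_smul_eq_zero_of_fg_of_le_smul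
      (Ideal.span {(2 : ℤ)}) ⊤ hfg hdiv
  have hrodd : Odd r := by
    rw [Ideal.mem_span_singleton] at hr1
    obtain ⟨c, hc⟩ := hr1
    exact ⟨c, by linarith⟩
  have hrne : r ≠ 0 := fun h0 => by simp [h0, Int.odd_iff] at hrodd
  ext a
  have hmem : r • a ∈ L := by
    have := hr0 (L'.mkQ a) trivial
    rw [← map_smul, Submodule.mkQ_apply, Submodule.Quotient.mk_eq_zero] at this
    exact this
  have hz : r • h a = 0 := by
    rw [← map_zsmul]
    exact hL _ hmem
  have hn : (r.natAbs : ℕ) • h a = 0 := by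
    rcases Int.natAbs_eq r with he | he
    · rw [← natCast_zsmul, ← he, hz]
    · rw [← natCast_zsmul, ← neg_neg ((r.natAbs : ℤ)), ← he, neg_zsmul, hz, neg_zero]
  exact hG (h a) r.natAbs (Int.natAbs_odd.mpr hrodd) (Int.natAbs_pos.mpr hrne) hn
end

section
/- Let A be the free abelian group with basis { e_k, g_k, h_k : k ≥ 1 } and let H ≤ A be the subgroup generated by { e_k + g_k + h_k : k ≥ 1 } ∪ { g_k + e_{k+1} : k ≥ 1 } ∪ { h_k + e_{k+1} : k ≥ 1 }. Then e₁ ∉ H, so H ≠ A. -/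
/-- The free abelian group on the basis `{e_k, g_k, h_k : k ∈ ℕ}`. -/
abbrev FA : Type := (Fin 3 × ℕ) →₀ ℤ

noncomputable def eGen (k : ℕ) : FA := Finsupp.single (0, k) 1
noncomputable def gGen (k : ℕ) : FA := Finsupp.single (1, k) 1
noncomputable def hGen (k : ℕ) : FA := Finsupp.single (2, k) 1

/-- The subgroup generated by `e_k+g_k+h_k`, `g_k+e_{k+1}`, `h_k+e_{k+1}`. -/
noncomputable def Hsub : AddSubgroup FA :=
  AddSubgroup.closure
    ((Set.range fun k : ℕ => eGen k + gGen k + hGen k) ∪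
      (Set.range fun k : ℕ => gGen k + eGen (k + 1)) ∪
      (Set.range fun k : ℕ => hGen k + eGen (k + 1)))

/-- The invariant values on basis elements. -/
noncomputable def fval : Fin 3 × ℕ → ℚ := fun p =>
  if p.1 = 0 then (1/2 : ℚ) ^ p.2 else -((1/2 : ℚ) ^ (p.2 + 1))

/-- The invariant homomorphism `FA →+ ℚ`. -/
noncomputable def phi : FA →+ ℚ :=
  Finsupp.liftAddHom (fun i => zmultiplesHom ℚ (fval i))

lemma phi_single (i : Fin 3 × ℕ) (n : ℤ) :
    phi (Finsupp.single i n) = n • fval i := by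
  simp [phi]

lemma phi_e (k : ℕ) : phi (eGen k) = (1/2 : ℚ) ^ k := by
  simp [eGen, phi_single, fval]

lemma phi_g (k : ℕ) : phi (gGen k) = -((1/2 : ℚ) ^ (k + 1)) := by
  simp [gGen, phi_single, fval]

lemma phi_h (k : ℕ) : phi (hGen k) = -((1/2 : ℚ) ^ (k + 1)) := by
  simp [hGen, phi_single, fval]

lemma phi_ker : ∀ x ∈ Hsub, phi x = 0 := by
  intro x hx
  have : Hsub ≤ (AddMonoidHom.ker phi) := by
    rw [Hsub]
    apply AddSubgroup.closure_le _ |>.2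
    rintro y ((⟨k, rfl⟩ | ⟨k, rfl⟩) | ⟨k, rfl⟩) <;>
      simp only [SetLike.mem_coe, AddMonoidHom.mem_ker, map_add, phi_e, phi_g, phi_h] <;> ring
  exact this hx

/-- `e_1` (here `e_0` with 0-based indexing) is not in `H`, so `H ≠ A`. -/
theorem stmt14 : eGen 0 ∉ Hsub ∧ Hsub ≠ ⊤ := by
  have hne : eGen 0 ∉ Hsub := by
    intro h
    have := phi_ker _ h
    rw [phi_e] at this
    norm_num at this
  exact ⟨hne, fun h => hne (h ▸ AddSubgroup.mem_top _)⟩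
end

section
/- With A and H as above, the image of H in A/2A equals A/2A; that is, every basis element of A is congruent mod 2A to an element of H. (Explicitly, e_k ≡ (e_k+g_k+h_k) + (g_k+e_{k+1}) + (h_k+e_{k+1}) mod 2A.) -/
noncomputable def Ksub : AddSubgroup FA where
  carrier := {a | ∃ x ∈ Hsub, ∃ b : FA, a = x + 2 • b}
  zero_mem' := ⟨0, zero_mem _, 0, by simp⟩
  add_mem' := by
    rintro a a' ⟨x, hx, b, rfl⟩ ⟨x', hx', b', rfl⟩
    exact ⟨x + x', add_mem hx hx', b + b', by abel⟩
  neg_mem' := by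
    rintro a ⟨x, hx, b, rfl⟩
    exact ⟨-x, neg_mem hx, -b, by abel⟩

lemma mem1 (k : ℕ) : eGen k + gGen k + hGen k ∈ Hsub :=
  AddSubgroup.subset_closure (Or.inl (Or.inl ⟨k, rfl⟩))

lemma mem2 (k : ℕ) : gGen k + eGen (k + 1) ∈ Hsub :=
  AddSubgroup.subset_closure (Or.inl (Or.inr ⟨k, rfl⟩))

lemma mem3 (k : ℕ) : hGen k + eGen (k + 1) ∈ Hsub :=
  AddSubgroup.subset_closure (Or.inr ⟨k, rfl⟩)

lemma eMem (k : ℕ) : eGen k ∈ Ksub := by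
  refine ⟨(eGen k + gGen k + hGen k) + (gGen k + eGen (k + 1)) + (hGen k + eGen (k + 1)),
    add_mem (add_mem (mem1 k) (mem2 k)) (mem3 k),
    -(gGen k + hGen k + eGen (k + 1)), by abel⟩

lemma gMem (k : ℕ) : gGen k ∈ Ksub := by
  obtain ⟨x, hx, b, hb⟩ := eMem (k + 1)
  exact ⟨(gGen k + eGen (k + 1)) - x, sub_mem (mem2 k) hx, -b, by rw [hb]; abel⟩

lemma hMem (k : ℕ) : hGen k ∈ Ksub := by
  obtain ⟨x, hx, b, hb⟩ := eMem (k + 1)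
  exact ⟨(hGen k + eGen (k + 1)) - x, sub_mem (mem3 k) hx, -b, by rw [hb]; abel⟩

lemma singleMem (i : Fin 3) (k : ℕ) (n : ℤ) : Finsupp.single (i, k) n ∈ Ksub := by
  have h1 : Finsupp.single (i, k) n = n • Finsupp.single ((i, k) : Fin 3 × ℕ) (1 : ℤ) := by
    rw [Finsupp.smul_single', mul_one]
  rw [h1]
  fin_cases i
  · exact zsmul_mem (eMem k) n
  · exact zsmul_mem (gMem k) n
  · exact zsmul_mem (hMem k) n

/-- The image of `H` in `A/2A` is all of `A/2A`. -/
theorem stmt16 : ∀ a : FA, ∃ x ∈ Hsub, ∃ b : FA, a = x + 2 • b := by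
  intro a
  have : a ∈ Ksub := by
    induction a using Finsupp.induction with
    | zero => exact zero_mem _
    | single_add p n f _ _ ih => exact add_mem (singleMem p.1 p.2 n) ih
  exact this
end

section
/- Finite counterexample (wheel): In the cyclic group ℤ_{2k−1} with k ≥ 2, consider gains g₁, …, g_{2k} ∈ ℤ_{2k−1} on the outer edges of the wheel W_{2k} satisfying g_{i+1} + g_{i+2} + ⋯ + g_{i+2k−1} = 0 (indices mod 2k) for all i. Then all g_i are equal to a common value a with (2k−1)·a = 0, and conversely any such constant assignment satisfies all these relations; for a ≠ 0 the total sum g₁ + ⋯ + g_{2k} = a ≠ 0, so the outer cycle is unbalanced while all 2k Hamiltonian-circle relations hold. -/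
/-- Wheel counterexample: if every sum of `2k-1` cyclically consecutive outer gains
vanishes in `ℤ_{2k-1}`, then all gains are equal, the total sum equals the common
value, and conversely every constant assignment satisfies all the relations. -/
theorem stmt17 (k : ℕ) (hk : 2 ≤ k) (g : ZMod (2 * k) → ZMod (2 * k - 1))
    (hg : ∀ i : ZMod (2 * k),
      ∑ j ∈ Finset.range (2 * k - 1), g (i + (j + 1 : ℕ)) = 0) :
    (∃ a : ZMod (2 * k - 1), (∀ i, g i = a) ∧ (2 * k - 1) • a = 0 ∧
        ∑ i ∈ Finset.range (2 * k), g (i : ZMod (2 * k)) = a) ∧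
      (∀ a : ZMod (2 * k - 1), ∀ i : ZMod (2 * k),
        ∑ j ∈ Finset.range (2 * k - 1), (fun _ : ZMod (2 * k) => a) (i + (j + 1 : ℕ)) = 0) := by
  haveI : NeZero (2 * k) := ⟨by omega⟩
  obtain ⟨m, hm⟩ : ∃ m, 2 * k - 1 = m + 1 := ⟨2 * k - 2, by omega⟩
  have hm2 : 2 * k = m + 2 := by omega
  -- step: g is shift-invariant
  have key : ∀ i : ZMod (2 * k), g (i + 1) = g i := by
    intro i
    have h1 := hg i
    have h2 := hg (i + 1)
    have h1' : ∑ j ∈ Finset.range (m + 1), g (i + ((j + 1 : ℕ) : ZMod (2 * k))) = 0 := by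
      rw [← hm]; exact h1
    have h2' : ∑ j ∈ Finset.range (m + 1), g (i + 1 + ((j + 1 : ℕ) : ZMod (2 * k))) = 0 := by
      rw [← hm]; exact h2
    rw [Finset.sum_range_succ'] at h1'
    rw [Finset.sum_range_succ] at h2'
    have e1 : ∀ j : ℕ, g (i + ((j + 1 + 1 : ℕ) : ZMod (2 * k)))
        = g (i + 1 + ((j + 1 : ℕ) : ZMod (2 * k))) := by
      intro j; push_cast; ring_nf
    have e2 : g (i + 1 + ((m + 1 : ℕ) : ZMod (2 * k))) = g i := by
      have : ((m + 2 : ℕ) : ZMod (2 * k)) = 0 := by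
        rw [← hm2]; exact ZMod.natCast_self _
      have h : i + 1 + ((m + 1 : ℕ) : ZMod (2 * k)) = i := by
        push_cast at this ⊢
        linear_combination this
      rw [h]
    rw [Finset.sum_congr rfl (fun j _ => e1 j)] at h1'
    rw [e2] at h2'
    have := h1'.trans h2'.symm
    have h0 : g (i + ((0 + 1 : ℕ) : ZMod (2 * k))) = g (i + 1) := by norm_num
    rw [h0] at this
    exact add_left_cancel this
  have const : ∀ i : ZMod (2 * k), g i = g 0 := by
    have hn : ∀ n : ℕ, g (n : ZMod (2 * k)) = g 0 := by
      intro n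
      induction n with
      | zero => simp
      | succ n ih => push_cast; rw [key]; exact ih
    intro i
    have := hn i.val
    rwa [ZMod.natCast_val, ZMod.cast_id] at this
  refine ⟨⟨g 0, const, ?_, ?_⟩, ?_⟩
  · have h0 := hg 0
    rw [Finset.sum_congr rfl (fun j _ => const _)] at h0
    rw [Finset.sum_const, Finset.card_range] at h0
    exact h0
  · have h0 := hg 0
    rw [Finset.sum_congr rfl (fun j _ => const _)] at h0
    rw [Finset.sum_const, Finset.card_range] at h0
    rw [Finset.sum_congr rfl (fun j _ => const _), Finset.sum_const, Finset.card_range]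
    rw [← Nat.cast_smul_eq_nsmul (ZMod (2 * k - 1))]
    have hc : ((2 * k : ℕ) : ZMod (2 * k - 1)) = 1 := by
      have h' : (2 * k : ℕ) = (2 * k - 1) + 1 := by omega
      rw [h', Nat.cast_add, ZMod.natCast_self, Nat.cast_one, zero_add]
    rw [hc, one_smul]
  · intro a i
    rw [Finset.sum_const, Finset.card_range]
    rw [← Nat.cast_smul_eq_nsmul (ZMod (2 * k - 1)), ZMod.natCast_self, zero_smul]
end
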